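/- For Markovian SI dynamics with infection rate τ > 0 on the closed triangle, Kirkwood's closure is exact on every state: for every pure initial configuration x⁰ : {1,2,3} → Fin 2, all A, B, C ∈ Fin 2 and all t ≥ 0, P_{123}(A,B,C;t) · P_1(A;t) · P_2(B;t) · P_3(C;t) = P_{12}(A,B;t) · P_{23}(B,C;t) · P_{13}(A,C;t). -/

import Mathlib

open Finset

/-- Rate of a single off-diagonal transition for the Markovian SI model with states
`0 = S`, `1 = I`: nonzero only if `y` agrees with `x` except at exactly one node `i`,
where `S → I` occurs at rate `τ · #infectious neighbours`. -/
noncomputable def siRate {V : Type*} [Fintype V] [DecidableEq V] (G : SimpleGraph V)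
    [DecidableRel G.Adj] (τ : ℝ) (x y : V → Fin 2) : ℝ :=
  ∑ i : V,
    (if (∀ j, j ≠ i → x j = y j) ∧ x i = 0 ∧ y i = 1 then
        τ * ((Finset.univ.filter (fun j => G.Adj i j ∧ x j = 1)).card : ℝ) else 0)

/-- Generator matrix of the Markovian SI dynamics on configurations `V → Fin 2`. -/
noncomputable def siGen {V : Type*} [Fintype V] [DecidableEq V] (G : SimpleGraph V)
    [DecidableRel G.Adj] (τ : ℝ) : Matrix (V → Fin 2) (V → Fin 2) ℝ :=
  fun x y => if x = y then -∑ z ∈ Finset.univ.erase x, siRate G τ x z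
             else siRate G τ x y

/-- Distribution at time `t` started from the pure configuration `x0`. -/
noncomputable def siP {V : Type*} [Fintype V] [DecidableEq V] (G : SimpleGraph V)
    [DecidableRel G.Adj] (τ : ℝ) (x0 : V → Fin 2) (t : ℝ) (x : V → Fin 2) : ℝ :=
  NormedSpace.exp (t • siGen G τ) x0 x

/-- Single-node marginal `P_i(A;t)`. -/
noncomputable def siP1 {V : Type*} [Fintype V] [DecidableEq V] (G : SimpleGraph V)
    [DecidableRel G.Adj] (τ : ℝ) (x0 : V → Fin 2) (i : V) (A : Fin 2) (t : ℝ) : ℝ :=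
  ∑ x ∈ Finset.univ.filter (fun x : V → Fin 2 => x i = A), siP G τ x0 t x

/-- Pair marginal `P_{ij}(A,B;t)`. -/
noncomputable def siP2 {V : Type*} [Fintype V] [DecidableEq V] (G : SimpleGraph V)
    [DecidableRel G.Adj] (τ : ℝ) (x0 : V → Fin 2) (i j : V) (A B : Fin 2) (t : ℝ) : ℝ :=
  ∑ x ∈ Finset.univ.filter (fun x : V → Fin 2 => x i = A ∧ x j = B), siP G τ x0 t x

/-- Triple marginal `P_{ijk}(A,B,C;t)`. -/
noncomputable def siP3 {V : Type*} [Fintype V] [DecidableEq V] (G : SimpleGraph V)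
    [DecidableRel G.Adj] (τ : ℝ) (x0 : V → Fin 2) (i j k : V) (A B C : Fin 2) (t : ℝ) : ℝ :=
  ∑ x ∈ Finset.univ.filter (fun x : V → Fin 2 => x i = A ∧ x j = B ∧ x k = C),
    siP G τ x0 t x

/-- The closed triangle: the complete graph on nodes `{0,1,2}` (representing `1,2,3`). -/
def triangle : SimpleGraph (Fin 3) := ⊤

instance : DecidableRel triangle.Adj :=
  fun i j => inferInstanceAs (Decidable (i ≠ j))


namespace SIK

def r (x y : Fin 3 → Fin 2) : ℤ :=
  ∑ i : Fin 3,
    (if (∀ j, j ≠ i → x j = y j) ∧ x i = 0 ∧ y i = 1 then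
        ((Finset.univ.filter (fun j => triangle.Adj i j ∧ x j = 1)).card : ℤ) else 0)

def m (x y : Fin 3 → Fin 2) : ℤ := if x = y then r x x - ∑ z, r x z else r x y

def m2 (x y : Fin 3 → Fin 2) : ℤ := ∑ z, m x z * m z y

lemma key_int : ∀ x y, (∑ z, m2 x z * m z y) + 4 * m2 x y + 4 * m x y = 0 := by decide

lemma rate_eq (τ : ℝ) (x y : Fin 3 → Fin 2) :
    siRate triangle τ x y = τ * (r x y : ℝ) := by
  simp only [siRate, r]
  push_cast
  rw [Finset.mul_sum]
  refine Finset.sum_congr rfl fun i _ => ?_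
  split <;> simp

lemma gen_eq (τ : ℝ) (x y : Fin 3 → Fin 2) :
    siGen triangle τ x y = τ * (m x y : ℝ) := by
  by_cases h : x = y
  · subst h
    simp only [siGen, if_pos rfl, m, if_pos rfl]
    rw [← Finset.add_sum_erase _ _ (Finset.mem_univ x)]
    push_cast
    simp only [rate_eq]
    have h2 : ((r x x : ℝ) - ((r x x : ℝ) + ∑ z ∈ univ.erase x, (r x z : ℝ)))
        = -∑ z ∈ univ.erase x, (r x z : ℝ) := by ring
    rw [h2, mul_neg, Finset.mul_sum]
  · simp only [siGen, if_neg h, m, if_neg h, rate_eq]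

@[simp] lemma mv_000_000 : m ![0,0,0] ![0,0,0] = 0 := by decide
@[simp] lemma mv_000_001 : m ![0,0,0] ![0,0,1] = 0 := by decide
@[simp] lemma mv_000_010 : m ![0,0,0] ![0,1,0] = 0 := by decide
@[simp] lemma mv_000_011 : m ![0,0,0] ![0,1,1] = 0 := by decide
@[simp] lemma mv_000_100 : m ![0,0,0] ![1,0,0] = 0 := by decide
@[simp] lemma mv_000_101 : m ![0,0,0] ![1,0,1] = 0 := by decide
@[simp] lemma mv_000_110 : m ![0,0,0] ![1,1,0] = 0 := by decide
@[simp] lemma mv_000_111 : m ![0,0,0] ![1,1,1] = 0 := by decide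
@[simp] lemma mv_001_000 : m ![0,0,1] ![0,0,0] = 0 := by decide
@[simp] lemma mv_001_001 : m ![0,0,1] ![0,0,1] = -2 := by decide
@[simp] lemma mv_001_010 : m ![0,0,1] ![0,1,0] = 0 := by decide
@[simp] lemma mv_001_011 : m ![0,0,1] ![0,1,1] = 1 := by decide
@[simp] lemma mv_001_100 : m ![0,0,1] ![1,0,0] = 0 := by decide
@[simp] lemma mv_001_101 : m ![0,0,1] ![1,0,1] = 1 := by decide
@[simp] lemma mv_001_110 : m ![0,0,1] ![1,1,0] = 0 := by decide
@[simp] lemma mv_001_111 : m ![0,0,1] ![1,1,1] = 0 := by decide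
@[simp] lemma mv_010_000 : m ![0,1,0] ![0,0,0] = 0 := by decide
@[simp] lemma mv_010_001 : m ![0,1,0] ![0,0,1] = 0 := by decide
@[simp] lemma mv_010_010 : m ![0,1,0] ![0,1,0] = -2 := by decide
@[simp] lemma mv_010_011 : m ![0,1,0] ![0,1,1] = 1 := by decide
@[simp] lemma mv_010_100 : m ![0,1,0] ![1,0,0] = 0 := by decide
@[simp] lemma mv_010_101 : m ![0,1,0] ![1,0,1] = 0 := by decide
@[simp] lemma mv_010_110 : m ![0,1,0] ![1,1,0] = 1 := by decide
@[simp] lemma mv_010_111 : m ![0,1,0] ![1,1,1] = 0 := by decide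
@[simp] lemma mv_011_000 : m ![0,1,1] ![0,0,0] = 0 := by decide
@[simp] lemma mv_011_001 : m ![0,1,1] ![0,0,1] = 0 := by decide
@[simp] lemma mv_011_010 : m ![0,1,1] ![0,1,0] = 0 := by decide
@[simp] lemma mv_011_011 : m ![0,1,1] ![0,1,1] = -2 := by decide
@[simp] lemma mv_011_100 : m ![0,1,1] ![1,0,0] = 0 := by decide
@[simp] lemma mv_011_101 : m ![0,1,1] ![1,0,1] = 0 := by decide
@[simp] lemma mv_011_110 : m ![0,1,1] ![1,1,0] = 0 := by decide
@[simp] lemma mv_011_111 : m ![0,1,1] ![1,1,1] = 2 := by decide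
@[simp] lemma mv_100_000 : m ![1,0,0] ![0,0,0] = 0 := by decide
@[simp] lemma mv_100_001 : m ![1,0,0] ![0,0,1] = 0 := by decide
@[simp] lemma mv_100_010 : m ![1,0,0] ![0,1,0] = 0 := by decide
@[simp] lemma mv_100_011 : m ![1,0,0] ![0,1,1] = 0 := by decide
@[simp] lemma mv_100_100 : m ![1,0,0] ![1,0,0] = -2 := by decide
@[simp] lemma mv_100_101 : m ![1,0,0] ![1,0,1] = 1 := by decide
@[simp] lemma mv_100_110 : m ![1,0,0] ![1,1,0] = 1 := by decide
@[simp] lemma mv_100_111 : m ![1,0,0] ![1,1,1] = 0 := by decide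
@[simp] lemma mv_101_000 : m ![1,0,1] ![0,0,0] = 0 := by decide
@[simp] lemma mv_101_001 : m ![1,0,1] ![0,0,1] = 0 := by decide
@[simp] lemma mv_101_010 : m ![1,0,1] ![0,1,0] = 0 := by decide
@[simp] lemma mv_101_011 : m ![1,0,1] ![0,1,1] = 0 := by decide
@[simp] lemma mv_101_100 : m ![1,0,1] ![1,0,0] = 0 := by decide
@[simp] lemma mv_101_101 : m ![1,0,1] ![1,0,1] = -2 := by decide
@[simp] lemma mv_101_110 : m ![1,0,1] ![1,1,0] = 0 := by decide
@[simp] lemma mv_101_111 : m ![1,0,1] ![1,1,1] = 2 := by decide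
@[simp] lemma mv_110_000 : m ![1,1,0] ![0,0,0] = 0 := by decide
@[simp] lemma mv_110_001 : m ![1,1,0] ![0,0,1] = 0 := by decide
@[simp] lemma mv_110_010 : m ![1,1,0] ![0,1,0] = 0 := by decide
@[simp] lemma mv_110_011 : m ![1,1,0] ![0,1,1] = 0 := by decide
@[simp] lemma mv_110_100 : m ![1,1,0] ![1,0,0] = 0 := by decide
@[simp] lemma mv_110_101 : m ![1,1,0] ![1,0,1] = 0 := by decide
@[simp] lemma mv_110_110 : m ![1,1,0] ![1,1,0] = -2 := by decide
@[simp] lemma mv_110_111 : m ![1,1,0] ![1,1,1] = 2 := by decide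
@[simp] lemma mv_111_000 : m ![1,1,1] ![0,0,0] = 0 := by decide
@[simp] lemma mv_111_001 : m ![1,1,1] ![0,0,1] = 0 := by decide
@[simp] lemma mv_111_010 : m ![1,1,1] ![0,1,0] = 0 := by decide
@[simp] lemma mv_111_011 : m ![1,1,1] ![0,1,1] = 0 := by decide
@[simp] lemma mv_111_100 : m ![1,1,1] ![1,0,0] = 0 := by decide
@[simp] lemma mv_111_101 : m ![1,1,1] ![1,0,1] = 0 := by decide
@[simp] lemma mv_111_110 : m ![1,1,1] ![1,1,0] = 0 := by decide
@[simp] lemma mv_111_111 : m ![1,1,1] ![1,1,1] = 0 := by decide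
@[simp] lemma m2v_000_000 : m2 ![0,0,0] ![0,0,0] = 0 := by decide
@[simp] lemma m2v_000_001 : m2 ![0,0,0] ![0,0,1] = 0 := by decide
@[simp] lemma m2v_000_010 : m2 ![0,0,0] ![0,1,0] = 0 := by decide
@[simp] lemma m2v_000_011 : m2 ![0,0,0] ![0,1,1] = 0 := by decide
@[simp] lemma m2v_000_100 : m2 ![0,0,0] ![1,0,0] = 0 := by decide
@[simp] lemma m2v_000_101 : m2 ![0,0,0] ![1,0,1] = 0 := by decide
@[simp] lemma m2v_000_110 : m2 ![0,0,0] ![1,1,0] = 0 := by decide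
@[simp] lemma m2v_000_111 : m2 ![0,0,0] ![1,1,1] = 0 := by decide
@[simp] lemma m2v_001_000 : m2 ![0,0,1] ![0,0,0] = 0 := by decide
@[simp] lemma m2v_001_001 : m2 ![0,0,1] ![0,0,1] = 4 := by decide
@[simp] lemma m2v_001_010 : m2 ![0,0,1] ![0,1,0] = 0 := by decide
@[simp] lemma m2v_001_011 : m2 ![0,0,1] ![0,1,1] = -4 := by decide
@[simp] lemma m2v_001_100 : m2 ![0,0,1] ![1,0,0] = 0 := by decide
@[simp] lemma m2v_001_101 : m2 ![0,0,1] ![1,0,1] = -4 := by decide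
@[simp] lemma m2v_001_110 : m2 ![0,0,1] ![1,1,0] = 0 := by decide
@[simp] lemma m2v_001_111 : m2 ![0,0,1] ![1,1,1] = 4 := by decide
@[simp] lemma m2v_010_000 : m2 ![0,1,0] ![0,0,0] = 0 := by decide
@[simp] lemma m2v_010_001 : m2 ![0,1,0] ![0,0,1] = 0 := by decide
@[simp] lemma m2v_010_010 : m2 ![0,1,0] ![0,1,0] = 4 := by decide
@[simp] lemma m2v_010_011 : m2 ![0,1,0] ![0,1,1] = -4 := by decide
@[simp] lemma m2v_010_100 : m2 ![0,1,0] ![1,0,0] = 0 := by decide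
@[simp] lemma m2v_010_101 : m2 ![0,1,0] ![1,0,1] = 0 := by decide
@[simp] lemma m2v_010_110 : m2 ![0,1,0] ![1,1,0] = -4 := by decide
@[simp] lemma m2v_010_111 : m2 ![0,1,0] ![1,1,1] = 4 := by decide
@[simp] lemma m2v_011_000 : m2 ![0,1,1] ![0,0,0] = 0 := by decide
@[simp] lemma m2v_011_001 : m2 ![0,1,1] ![0,0,1] = 0 := by decide
@[simp] lemma m2v_011_010 : m2 ![0,1,1] ![0,1,0] = 0 := by decide
@[simp] lemma m2v_011_011 : m2 ![0,1,1] ![0,1,1] = 4 := by decide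
@[simp] lemma m2v_011_100 : m2 ![0,1,1] ![1,0,0] = 0 := by decide
@[simp] lemma m2v_011_101 : m2 ![0,1,1] ![1,0,1] = 0 := by decide
@[simp] lemma m2v_011_110 : m2 ![0,1,1] ![1,1,0] = 0 := by decide
@[simp] lemma m2v_011_111 : m2 ![0,1,1] ![1,1,1] = -4 := by decide
@[simp] lemma m2v_100_000 : m2 ![1,0,0] ![0,0,0] = 0 := by decide
@[simp] lemma m2v_100_001 : m2 ![1,0,0] ![0,0,1] = 0 := by decide
@[simp] lemma m2v_100_010 : m2 ![1,0,0] ![0,1,0] = 0 := by decide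
@[simp] lemma m2v_100_011 : m2 ![1,0,0] ![0,1,1] = 0 := by decide
@[simp] lemma m2v_100_100 : m2 ![1,0,0] ![1,0,0] = 4 := by decide
@[simp] lemma m2v_100_101 : m2 ![1,0,0] ![1,0,1] = -4 := by decide
@[simp] lemma m2v_100_110 : m2 ![1,0,0] ![1,1,0] = -4 := by decide
@[simp] lemma m2v_100_111 : m2 ![1,0,0] ![1,1,1] = 4 := by decide
@[simp] lemma m2v_101_000 : m2 ![1,0,1] ![0,0,0] = 0 := by decide
@[simp] lemma m2v_101_001 : m2 ![1,0,1] ![0,0,1] = 0 := by decide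
@[simp] lemma m2v_101_010 : m2 ![1,0,1] ![0,1,0] = 0 := by decide
@[simp] lemma m2v_101_011 : m2 ![1,0,1] ![0,1,1] = 0 := by decide
@[simp] lemma m2v_101_100 : m2 ![1,0,1] ![1,0,0] = 0 := by decide
@[simp] lemma m2v_101_101 : m2 ![1,0,1] ![1,0,1] = 4 := by decide
@[simp] lemma m2v_101_110 : m2 ![1,0,1] ![1,1,0] = 0 := by decide
@[simp] lemma m2v_101_111 : m2 ![1,0,1] ![1,1,1] = -4 := by decide
@[simp] lemma m2v_110_000 : m2 ![1,1,0] ![0,0,0] = 0 := by decide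
@[simp] lemma m2v_110_001 : m2 ![1,1,0] ![0,0,1] = 0 := by decide
@[simp] lemma m2v_110_010 : m2 ![1,1,0] ![0,1,0] = 0 := by decide
@[simp] lemma m2v_110_011 : m2 ![1,1,0] ![0,1,1] = 0 := by decide
@[simp] lemma m2v_110_100 : m2 ![1,1,0] ![1,0,0] = 0 := by decide
@[simp] lemma m2v_110_101 : m2 ![1,1,0] ![1,0,1] = 0 := by decide
@[simp] lemma m2v_110_110 : m2 ![1,1,0] ![1,1,0] = 4 := by decide
@[simp] lemma m2v_110_111 : m2 ![1,1,0] ![1,1,1] = -4 := by decide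
@[simp] lemma m2v_111_000 : m2 ![1,1,1] ![0,0,0] = 0 := by decide
@[simp] lemma m2v_111_001 : m2 ![1,1,1] ![0,0,1] = 0 := by decide
@[simp] lemma m2v_111_010 : m2 ![1,1,1] ![0,1,0] = 0 := by decide
@[simp] lemma m2v_111_011 : m2 ![1,1,1] ![0,1,1] = 0 := by decide
@[simp] lemma m2v_111_100 : m2 ![1,1,1] ![1,0,0] = 0 := by decide
@[simp] lemma m2v_111_101 : m2 ![1,1,1] ![1,0,1] = 0 := by decide
@[simp] lemma m2v_111_110 : m2 ![1,1,1] ![1,1,0] = 0 := by decide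
@[simp] lemma m2v_111_111 : m2 ![1,1,1] ![1,1,1] = 0 := by decide


noncomputable def gamf (τ t : ℝ) : ℝ :=
  (1 - Real.exp (-(2*τ*t)) - 2*τ*(t * Real.exp (-(2*τ*t)))) / (4*τ^2)

noncomputable def betf (τ t : ℝ) : ℝ :=
  t * Real.exp (-(2*τ*t)) + 4*τ*(gamf τ t)

lemma he (τ : ℝ) (s : ℝ) :
    HasDerivAt (fun s : ℝ => Real.exp (-(2*τ*s))) (-(2*τ) * Real.exp (-(2*τ*s))) s := by
  have h1 : HasDerivAt (fun s : ℝ => -(2*τ*s)) (-(2*τ)) s := by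
    have h := ((hasDerivAt_id s).const_mul (2*τ)).neg
    exact h.congr_deriv (by ring)
  refine ((Real.hasDerivAt_exp (-(2*τ*s))).comp s h1).congr_deriv ?_
  ring

lemma hgam (τ : ℝ) (hτ : τ ≠ 0) (s : ℝ) :
    HasDerivAt (fun u => gamf τ u) (s * Real.exp (-(2*τ*s))) s := by
  have h := (((hasDerivAt_const s (1:ℝ)).sub (he τ s)).sub
      (((hasDerivAt_id s).mul (he τ s)).const_mul (2*τ))).div_const (4*τ^2)
  simp only [id_eq] at h
  refine h.congr_deriv ?_
  field_simp
  ring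

lemma hbet (τ : ℝ) (hτ : τ ≠ 0) (s : ℝ) :
    HasDerivAt (fun u => betf τ u)
      (Real.exp (-(2*τ*s)) + 2*τ*(s * Real.exp (-(2*τ*s)))) s := by
  have h := ((hasDerivAt_id s).mul (he τ s)).add ((hgam τ hτ s).const_mul (4*τ))
  simp only [id_eq] at h
  exact h.congr_deriv (by ring)

/-- Main exponential formula, for a matrix `Q` satisfying `Q³ = -(4τ)Q² - (4τ²)Q`. -/
lemma exp_formula {X : Type*} [Fintype X] [DecidableEq X] (τ : ℝ) (hτ : τ ≠ 0)
    (Q : Matrix X X ℝ)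
    (hQ3 : Q * Q * Q = -((4*τ) • (Q * Q)) - (4*τ^2) • Q) (t : ℝ) :
    NormedSpace.exp (t • Q) = 1 + betf τ t • Q + gamf τ t • (Q * Q) := by
  letI : SeminormedRing (Matrix X X ℝ) := Matrix.linftyOpSemiNormedRing
  letI : NormedRing (Matrix X X ℝ) := Matrix.linftyOpNormedRing
  letI : NormedAlgebra ℝ (Matrix X X ℝ) := Matrix.linftyOpNormedAlgebra
  set E : ℝ → Matrix X X ℝ := fun s => 1 + betf τ s • Q + gamf τ s • (Q * Q) with hE
  have hEderiv : ∀ s, HasDerivAt E (Q * E s) s := by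
    intro s
    have h := ((hasDerivAt_const s (1:Matrix X X ℝ)).add ((hbet τ hτ s).smul_const Q)).add
      ((hgam τ hτ s).smul_const (Q * Q))
    have hval : Q * E s = (Real.exp (-(2*τ*s)) + 2*τ*(s * Real.exp (-(2*τ*s)))) • Q
        + (s * Real.exp (-(2*τ*s))) • (Q * Q) := by
      have hgval : 1 - 4*τ^2 * gamf τ s
          = Real.exp (-(2*τ*s)) + 2*τ*(s * Real.exp (-(2*τ*s))) := by
        rw [gamf]; field_simp; ring
      have hbval : betf τ s - 4*τ*gamf τ s = s * Real.exp (-(2*τ*s)) := by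
        rw [betf]; ring
      rw [hE]
      simp only [mul_add, mul_one, Matrix.mul_smul]
      rw [← mul_assoc, hQ3]
      rw [← hgval, ← hbval]
      simp only [smul_sub, smul_neg, smul_smul, sub_smul, smul_add]
      module
    rw [hval]
    simp only [zero_add] at h
    convert h using 1
    all_goals rfl
  have hF : ∀ s, HasDerivAt (fun s => NormedSpace.exp (s • (-Q)) * E s) 0 s := by
    intro s
    have h := (hasDerivAt_exp_smul_const (𝕂 := ℝ) (-Q) s).mul (hEderiv s)
    convert h using 1
    case e'_9 =>
      rw [mul_assoc, neg_mul, mul_neg]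
      abel
    all_goals rfl
  have hconst : ∀ s : ℝ, NormedSpace.exp (s • (-Q)) * E s
      = NormedSpace.exp ((0:ℝ) • (-Q)) * E 0 := by
    intro s
    exact is_const_of_deriv_eq_zero (fun u => (hF u).differentiableAt)
      (fun u => (hF u).deriv) s 0
  have hE0 : E 0 = 1 := by
    simp [hE, betf, gamf]
  have h1 : NormedSpace.exp (t • (-Q)) * E t = 1 := by
    rw [hconst t, hE0, zero_smul, NormedSpace.exp_zero, one_mul]
  have hcomm : Commute (t • Q) (t • (-Q)) := by
    apply Commute.smul_left
    apply Commute.smul_right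
    exact (Commute.refl Q).neg_right
  calc NormedSpace.exp (t • Q) = NormedSpace.exp (t • Q) * 1 := by rw [mul_one]
    _ = NormedSpace.exp (t • Q) * (NormedSpace.exp (t • (-Q)) * E t) := by rw [h1]
    _ = (NormedSpace.exp (t • Q) * NormedSpace.exp (t • (-Q))) * E t := by
        rw [mul_assoc]
    _ = NormedSpace.exp (t • Q + t • (-Q)) * E t := by
        rw [Matrix.exp_add_of_commute _ _ hcomm]
    _ = E t := by
        rw [smul_neg, add_neg_cancel, NormedSpace.exp_zero, one_mul]

lemma mul_entry (τ : ℝ) (x y : Fin 3 → Fin 2) :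
    (siGen triangle τ * siGen triangle τ) x y = τ^2 * (m2 x y : ℝ) := by
  simp only [Matrix.mul_apply, gen_eq, m2]
  push_cast
  rw [Finset.mul_sum]
  refine Finset.sum_congr rfl fun z _ => ?_
  ring

lemma hQ3 (τ : ℝ) :
    siGen triangle τ * siGen triangle τ * siGen triangle τ
      = -((4*τ) • (siGen triangle τ * siGen triangle τ)) - (4*τ^2) • siGen triangle τ := by
  ext x y
  have hk := key_int x y
  have hcast : ((∑ z, m2 x z * m z y : ℤ) : ℝ) = -(4 * (m2 x y : ℝ)) - 4 * (m x y : ℝ) := by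
    have h : (∑ z, m2 x z * m z y : ℤ) = -(4 * m2 x y) - 4 * m x y := by linarith
    rw [h]; push_cast; ring
  rw [Matrix.mul_apply]
  simp only [mul_entry, gen_eq, Matrix.sub_apply, Matrix.neg_apply, Matrix.smul_apply,
    smul_eq_mul]
  calc ∑ z, τ^2 * (m2 x z : ℝ) * (τ * (m z y : ℝ))
      = τ^3 * ((∑ z, m2 x z * m z y : ℤ) : ℝ) := by
        push_cast
        rw [Finset.mul_sum]
        refine Finset.sum_congr rfl fun z _ => ?_
        ring
    _ = -(4 * τ * (τ ^ 2 * (m2 x y : ℝ))) - 4 * τ ^ 2 * (τ * (m x y : ℝ)) := by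
        rw [hcast]; ring

lemma siP_eq (τ : ℝ) (hτ : τ ≠ 0) (x0 : Fin 3 → Fin 2) (t : ℝ) (x : Fin 3 → Fin 2) :
    siP triangle τ x0 t x = (if x0 = x then (1:ℝ) else 0)
      + (τ * betf τ t) * (m x0 x : ℝ) + (τ^2 * gamf τ t) * (m2 x0 x : ℝ) := by
  rw [siP, exp_formula τ hτ _ (hQ3 τ) t]
  simp only [Matrix.add_apply, Matrix.smul_apply, Matrix.one_apply, smul_eq_mul,
    gen_eq, mul_entry]
  ring

lemma sum_univ_fun3 {M : Type*} [AddCommMonoid M] (f : (Fin 3 → Fin 2) → M) :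
    ∑ x, f x = f ![0,0,0] + f ![0,0,1] + f ![0,1,0] + f ![0,1,1]
      + f ![1,0,0] + f ![1,0,1] + f ![1,1,0] + f ![1,1,1] := by
  rw [← Equiv.sum_comp
    (⟨fun p => ![p.1, p.2.1, p.2.2], fun x => (x 0, x 1, x 2), by decide, by decide⟩ :
      (Fin 2 × Fin 2 × Fin 2) ≃ (Fin 3 → Fin 2)) f]
  simp only [Equiv.coe_fn_mk, Fintype.sum_prod_type, Fin.sum_univ_two]
  abel

end SIK

set_option maxHeartbeats 3200000 in
/-- For Markovian SI dynamics on the closed triangle, Kirkwood's closure is exact on every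
state, for every pure initial configuration:
`P₁₂₃(A,B,C) · P₁(A) · P₂(B) · P₃(C) = P₁₂(A,B) · P₂₃(B,C) · P₁₃(A,C)`. -/
theorem si_triangle_kirkwood_exact
    (τ : ℝ) (hτ : 0 < τ) (x0 : Fin 3 → Fin 2) (A B C : Fin 2) (t : ℝ) (ht : 0 ≤ t) :
    siP3 triangle τ x0 0 1 2 A B C t * siP1 triangle τ x0 0 A t * siP1 triangle τ x0 1 B t
        * siP1 triangle τ x0 2 C t
      = siP2 triangle τ x0 0 1 A B t * siP2 triangle τ x0 1 2 B C t
          * siP2 triangle τ x0 0 2 A C t := by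
  obtain ⟨a1, a2, a3, rfl⟩ : ∃ a b c : Fin 2, x0 = ![a,b,c] :=
    ⟨x0 0, x0 1, x0 2, by funext i; fin_cases i <;> rfl⟩
  have hτ' : τ ≠ 0 := ne_of_gt hτ
  simp only [siP3, siP2, siP1, Finset.sum_filter, SIK.siP_eq τ hτ' _ t, SIK.sum_univ_fun3]
  fin_cases a1 <;> fin_cases a2 <;> fin_cases a3 <;>
    fin_cases A <;> fin_cases B <;> fin_cases C <;>
    · simp +decide
      try ring
      try tauto
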